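/- Define E_KKA : ℝ → ℝ by E_KKA(θ) = (36/37)(12−θ)² + (1/2)(2+θ)² + (121/122)(2−θ)² + (16/17)(8−θ)² for θ ≤ 2; E_KKA(θ) = (36/37)(12−θ)² + (1/2)(2+θ)² + (1/2)(2−θ)² + (16/17)(8−θ)² for 2 < θ ≤ 8; and E_KKA(θ) = (36/37)(12−θ)² + (1/2)(2+θ)² + (1/2)(2−θ)² + (36/37)(8−θ)² for θ > 8. Then E_KKA attains a unique minimum over the interval [0,10] at θ* = 12080/1833; in particular, the minimizer satisfies θ* ≠ 10. -/
import Mathlib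


open Set

noncomputable section

/-- The population slack objective `4·E(‖ε_i‖²)` of the KKA heuristic in the
counterexample of Proposition 1. -/
def EKKA : ℝ → ℝ := fun θ =>
  if θ ≤ 2 then
    (36 / 37) * (12 - θ) ^ 2 + (1 / 2) * (2 + θ) ^ 2 + (121 / 122) * (2 - θ) ^ 2 +
      (16 / 17) * (8 - θ) ^ 2
  else if θ ≤ 8 then
    (36 / 37) * (12 - θ) ^ 2 + (1 / 2) * (2 + θ) ^ 2 + (1 / 2) * (2 - θ) ^ 2 +
      (16 / 17) * (8 - θ) ^ 2
  else
    (36 / 37) * (12 - θ) ^ 2 + (1 / 2) * (2 + θ) ^ 2 + (1 / 2) * (2 - θ) ^ 2 +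
      (36 / 37) * (8 - θ) ^ 2

/-- In the counterexample showing that KKA is not estimation consistent, the
objective `E_KKA` attains a unique minimum over `[0,10]` at `θ* = 12080/1833 ≠ 10`. -/
theorem statement18 :
    (12080 / 1833 : ℝ) ∈ Icc (0 : ℝ) 10 ∧
    (∀ θ ∈ Icc (0 : ℝ) 10, θ ≠ 12080 / 1833 → EKKA (12080 / 1833) < EKKA θ) ∧
    (12080 / 1833 : ℝ) ≠ 10 := by
  refine ⟨by norm_num, ?_, by norm_num⟩
  intro θ _ hne
  have hstar : EKKA (12080 / 1833) =
      (36 / 37) * (12 - (12080 / 1833 : ℝ)) ^ 2 + (1 / 2) * (2 + (12080 / 1833 : ℝ)) ^ 2 +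
        (1 / 2) * (2 - (12080 / 1833 : ℝ)) ^ 2 + (16 / 17) * (8 - (12080 / 1833 : ℝ)) ^ 2 := by
    unfold EKKA
    norm_num
  rw [hstar]
  unfold EKKA
  split_ifs with h1 h2
  · nlinarith [sq_nonneg (θ - 12080 / 1833), sq_nonneg (2 - θ)]
  · have : (0 : ℝ) < (θ - 12080 / 1833) ^ 2 := by
      have : θ - 12080 / 1833 ≠ 0 := sub_ne_zero.mpr hne
      positivity
    nlinarith [this]
  · nlinarith [sq_nonneg (θ - 12080 / 1833), sq_nonneg (8 - θ)]
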